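/- Let N ≥ 1, let S ⊆ ℝ^N be compact, and let f, h ∈ B_S. Let D ⊆ ℝ^N be a measurable set with nonempty interior. If f = h almost everywhere on D, then f = h almost everywhere on ℝ^N (i.e., f = h as elements of L²(ℝ^N)). -/

import Mathlib

open MeasureTheory FourierTransform Filter

noncomputable section

private lemma exp_re_aux (z : ℂ) (cr br : ℝ) :
    ((2 * (Real.pi : ℂ) * Complex.I) * ((cr : ℂ) + z * (br : ℂ))).re
      = -(2 * Real.pi) * (z.im * br) := by
  simp [Complex.mul_re, Complex.mul_im, Complex.add_re, Complex.add_im]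

private lemma norm_two_pi_I_mul (r : ℝ) :
    ‖(2 * (Real.pi : ℂ) * Complex.I * (r : ℂ))‖ = 2 * Real.pi * |r| := by
  simp [map_mul, Complex.norm_two, Complex.norm_I, Complex.norm_real,
    abs_of_nonneg Real.pi_nonneg]

private lemma inv_fourier_zero_everywhere {N : ℕ}
    {u : EuclideanSpace ℝ (Fin N) → ℂ} (hu : Integrable u)
    {M : ℝ} (hM : ∀ k, u k ≠ 0 → ‖k‖ ≤ M)
    {x₀ : EuclideanSpace ℝ (Fin N)} {ε : ℝ} (hε : 0 < ε)
    (h0 : ∀ y ∈ Metric.ball x₀ ε, 𝓕⁻ u y = 0) (x : EuclideanSpace ℝ (Fin N)) :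
    𝓕⁻ u x = 0 := by
  classical
  set R : ℝ := ‖x - x₀‖ with hRdef
  have hR0 : 0 ≤ R := norm_nonneg _
  set b : EuclideanSpace ℝ (Fin N) → ℝ := fun k => inner ℝ k (x - x₀) with hbdef
  set c : EuclideanSpace ℝ (Fin N) → ℝ := fun k => inner ℝ k x₀ with hcdef
  set F : ℂ → EuclideanSpace ℝ (Fin N) → ℂ :=
    fun z k => Complex.exp ((2 * (Real.pi : ℂ) * Complex.I) * ((c k : ℂ) + z * (b k : ℂ))) * u k
    with hFdef
  set F' : ℂ → EuclideanSpace ℝ (Fin N) → ℂ :=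
    fun z k => (Complex.exp ((2 * (Real.pi : ℂ) * Complex.I) * ((c k : ℂ) + z * (b k : ℂ))) *
      ((2 * (Real.pi : ℂ) * Complex.I) * (b k : ℂ))) * u k with hF'def
  set φ : ℂ → ℂ := fun z => ∫ k, F z k with hφdef
  have hbnd : ∀ k, u k ≠ 0 → |b k| ≤ M * R := by
    intro k hk
    calc |b k| ≤ ‖k‖ * ‖x - x₀‖ := abs_real_inner_le_norm k (x - x₀)
    _ ≤ M * R := mul_le_mul_of_nonneg_right (hM k hk) hR0
  have hMR0 : ∀ k, u k ≠ 0 → (0:ℝ) ≤ M * R := fun k hk => le_trans (abs_nonneg _) (hbnd k hk)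
  have hnormF : ∀ z k, ‖F z k‖
      = Real.exp (-(2 * Real.pi) * (z.im * b k)) * ‖u k‖ := by
    intro z k
    rw [hFdef]
    simp only [norm_mul, Complex.norm_exp, exp_re_aux]
  have hexp_le : ∀ (z : ℂ) (k : EuclideanSpace ℝ (Fin N)) (A : ℝ), u k ≠ 0 → ‖z‖ ≤ A →
      Real.exp (-(2 * Real.pi) * (z.im * b k)) ≤ Real.exp (2 * Real.pi * A * (M * R)) := by
    intro z k A hk hzA
    refine Real.exp_le_exp.2 ?_
    have h1 : |z.im * b k| ≤ A * (M * R) := by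
      rw [abs_mul]
      exact mul_le_mul ((Complex.abs_im_le_norm z).trans hzA) (hbnd k hk) (abs_nonneg _)
        ((norm_nonneg z).trans hzA)
    nlinarith [Real.pi_pos, neg_abs_le (z.im * b k)]
  have hnormF_le : ∀ z k, ‖F z k‖ ≤ Real.exp (2 * Real.pi * ‖z‖ * (M * R)) * ‖u k‖ := by
    intro z k
    by_cases hk : u k = 0
    · simp [hnormF, hk]
    · rw [hnormF]
      exact mul_le_mul_of_nonneg_right (hexp_le z k ‖z‖ hk le_rfl) (norm_nonneg _)
  have hmeas_exp : ∀ z : ℂ, Continuous fun k : EuclideanSpace ℝ (Fin N) =>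
      Complex.exp ((2 * (Real.pi : ℂ) * Complex.I) * ((c k : ℂ) + z * (b k : ℂ))) := by
    intro z
    refine Complex.continuous_exp.comp ?_
    exact Continuous.mul continuous_const
      (Continuous.add (Complex.continuous_ofReal.comp (continuous_id.inner continuous_const))
        (Continuous.mul continuous_const
          (Complex.continuous_ofReal.comp (continuous_id.inner continuous_const))))
  have hFmeas : ∀ z : ℂ, AEStronglyMeasurable (F z) volume :=
    fun z => ((hmeas_exp z).aestronglyMeasurable).mul hu.1
  have hFint : ∀ z : ℂ, Integrable (F z) := fun z =>
    Integrable.mono' (hu.norm.const_mul (Real.exp (2 * Real.pi * ‖z‖ * (M * R))))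
      (hFmeas z) (ae_of_all _ fun k => hnormF_le z k)
  have hF'meas : ∀ z : ℂ, AEStronglyMeasurable (F' z) volume := fun z =>
    (((hmeas_exp z).mul (Continuous.mul continuous_const
      (Complex.continuous_ofReal.comp
        (continuous_id.inner continuous_const)))).aestronglyMeasurable).mul hu.1
  have hnormF' : ∀ z k, ‖F' z k‖
      = (Real.exp (-(2 * Real.pi) * (z.im * b k)) * (2 * Real.pi * |b k|)) * ‖u k‖ := by
    intro z k
    rw [hF'def]
    rw [norm_mul, norm_mul, norm_two_pi_I_mul]
    congr 2
    simp only [Complex.norm_exp, exp_re_aux]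
  have hderiv : ∀ k : EuclideanSpace ℝ (Fin N), ∀ z : ℂ, HasDerivAt (fun w => F w k) (F' z k) z := by
    intro k z
    have h1 : HasDerivAt (fun w : ℂ => (c k : ℂ) + w * (b k : ℂ)) ((b k : ℂ)) z := by
      simpa using ((hasDerivAt_id z).mul_const ((b k : ℂ))).const_add ((c k : ℂ))
    have h4 := ((h1.const_mul (2 * (Real.pi : ℂ) * Complex.I)).cexp).mul_const (u k)
    convert h4 using 1
  have hkey : ∀ z₀ : ℂ, HasDerivAt φ (∫ k, F' z₀ k) z₀ := by
    intro z₀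
    set bound : EuclideanSpace ℝ (Fin N) → ℝ := fun k =>
      (Real.exp (2 * Real.pi * (‖z₀‖ + 1) * (M * R)) * (2 * Real.pi * (M * R))) * ‖u k‖
      with hbound_def
    have h_bound : ∀ k, ∀ z ∈ Metric.ball z₀ 1, ‖F' z k‖ ≤ bound k := by
      intro k z hz
      by_cases hk : u k = 0
      · simp only [hnormF', hbound_def, hk, norm_zero, mul_zero, le_refl]
      have hzn : ‖z‖ ≤ ‖z₀‖ + 1 := by
        have h := mem_ball_iff_norm.1 hz
        calc ‖z‖ = ‖z₀ + (z - z₀)‖ := by ring_nf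
        _ ≤ ‖z₀‖ + ‖z - z₀‖ := norm_add_le _ _
        _ ≤ ‖z₀‖ + 1 := by linarith
      rw [hnormF', hbound_def]
      refine mul_le_mul_of_nonneg_right ?_ (norm_nonneg _)
      refine mul_le_mul (hexp_le z k _ hk hzn) ?_ (by positivity) (Real.exp_nonneg _)
      exact mul_le_mul_of_nonneg_left (hbnd k hk) (by positivity)
    have bound_int : Integrable bound := hu.norm.const_mul _
    exact (hasDerivAt_integral_of_dominated_loc_of_deriv_le (μ := (volume : Measure (EuclideanSpace ℝ (Fin N))))
      (Metric.ball_mem_nhds z₀ one_pos) (Eventually.of_forall fun z => hFmeas z) (hFint z₀) (hF'meas z₀)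
      (ae_of_all _ h_bound) bound_int
      (ae_of_all _ fun k z _ => hderiv k z)).2
  have hdiff : Differentiable ℂ φ := fun z => (hkey z).differentiableAt
  -- φ at real t equals the inverse Fourier transform at x₀ + t • (x - x₀)
  have hφ_real : ∀ t : ℝ, φ t = 𝓕⁻ u (x₀ + t • (x - x₀)) := by
    intro t
    have hφval : φ (t : ℂ) = ∫ k, F (t : ℂ) k := rfl
    rw [hφval, Real.fourierInv_eq']
    refine integral_congr_ae (Eventually.of_forall fun k => ?_)
    show F (t : ℂ) k = _
    simp only [smul_eq_mul, hFdef]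
    congr 1
    have hin : (inner ℝ k (x₀ + t • (x - x₀)) : ℝ) = c k + t * b k := by
      rw [inner_add_right, real_inner_smul_right]
    rw [hin]
    push_cast
    ring
  -- φ vanishes on small positive reals
  set δ : ℝ := ε / (R + 1) with hδdef
  have hδpos : 0 < δ := div_pos hε (by linarith)
  have hφ_zero : ∀ t : ℝ, 0 < t → t ≤ δ → φ t = 0 := by
    intro t ht htδ
    rw [hφ_real t]
    refine h0 _ ?_
    rw [Metric.mem_ball, dist_eq_norm]
    have : ‖x₀ + t • (x - x₀) - x₀‖ = t * R := by
      rw [add_sub_cancel_left, norm_smul, Real.norm_eq_abs, abs_of_pos ht]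
    rw [this]
    calc t * R ≤ δ * R := mul_le_mul_of_nonneg_right htδ hR0
    _ < δ * (R + 1) := by nlinarith
    _ = ε := by rw [hδdef]; exact div_mul_cancel₀ ε (ne_of_gt (by linarith))
  have hfreq : ∃ᶠ z in nhdsWithin (0 : ℂ) {(0:ℂ)}ᶜ, φ z = 0 := by
    have htend : Tendsto (fun n : ℕ => ((δ / (n + 1) : ℝ) : ℂ)) atTop
        (nhdsWithin (0 : ℂ) {(0:ℂ)}ᶜ) := by
      refine tendsto_nhdsWithin_of_tendsto_nhds_of_eventually_within _ ?_ ?_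
      · have : Tendsto (fun n : ℕ => (δ / (n + 1) : ℝ)) atTop (nhds 0) := by
          simpa [div_eq_mul_inv] using tendsto_one_div_add_atTop_nhds_zero_nat.const_mul δ
        exact (Complex.continuous_ofReal.tendsto 0).comp this
      · refine Eventually.of_forall fun n => ?_
        simp only [Set.mem_compl_iff, Set.mem_singleton_iff]
        have : (0:ℝ) < δ / (n + 1) := div_pos hδpos (by positivity)
        exact_mod_cast ne_of_gt (by exact_mod_cast this)
    refine htend.frequently (Frequently.of_forall fun n => ?_)
    refine hφ_zero _ (div_pos hδpos (by positivity)) ?_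
    rw [div_le_iff₀ (by positivity)]
    nlinarith [hδpos.le]
  have hzero : ∀ z : ℂ, φ z = 0 := by
    have hA : AnalyticOnNhd ℂ φ Set.univ := fun z _ => hdiff.analyticAt z
    have := hA.eqOn_zero_of_preconnected_of_frequently_eq_zero isPreconnected_univ
      (Set.mem_univ (0:ℂ)) hfreq
    exact fun z => this (Set.mem_univ z)
  -- conclude at z = 1
  have h1 : 𝓕⁻ u x = φ 1 := by
    have hφval : φ (1 : ℂ) = ∫ k, F (1 : ℂ) k := rfl
    rw [hφval, Real.fourierInv_eq']
    refine integral_congr_ae (Eventually.of_forall fun k => ?_)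
    show _ = F (1 : ℂ) k
    simp only [smul_eq_mul, hFdef]
    congr 1
    have hin : (inner ℝ k x : ℝ) = c k + b k := by
      rw [hcdef, hbdef]
      simp only
      rw [← inner_add_right, add_sub_cancel]
    rw [hin]
    push_cast
    ring
  rw [h1, hzero 1]

/-- The Hilbert space `L²(ℝᴺ; ℂ)` of square-integrable functions on `ℝᴺ`. -/
abbrev L2Space (N : ℕ) : Type :=
  Lp ℂ 2 (volume : Measure (EuclideanSpace ℝ (Fin N)))

/-- `f ∈ L²(ℝᴺ)` is bandlimited to `S`: its Fourier transform vanishes (a.e.) outside `S`;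
equivalently, `f` agrees a.e. with the inverse Fourier transform of an integrable function `F`
vanishing outside `S`. -/
def IsBandlimited {N : ℕ} (S : Set (EuclideanSpace ℝ (Fin N))) (f : L2Space N) : Prop :=
  ∃ F : EuclideanSpace ℝ (Fin N) → ℂ,
    Integrable F ∧ (∀ k, k ∉ S → F k = 0) ∧
      (f : EuclideanSpace ℝ (Fin N) → ℂ) =ᵐ[volume] 𝓕⁻ F

/-- Multiplication of `f ∈ L²` by the indicator function `χ_D`, as an element of `L²`. -/
def chiMul {N : ℕ} {D : Set (EuclideanSpace ℝ (Fin N))} (hD : MeasurableSet D)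
    (f : L2Space N) : L2Space N :=
  ((Lp.memLp f).indicator hD).toLp (D.indicator f)

/-- The orthogonal projection of `L²(ℝᴺ)` onto a closed subspace `K`. -/
def projOf {N : ℕ} (K : Submodule ℂ (L2Space N)) (hK : IsClosed (K : Set (L2Space N))) :
    L2Space N → L2Space N :=
  haveI : CompleteSpace K := hK.completeSpace_coe
  fun f => (K.orthogonalProjectionOnto f : L2Space N)

/-- The operator `T_h^{(D)} f = P_S (f + χ_D (h − f))` (single region). -/
def Tsingle {N : ℕ} (K : Submodule ℂ (L2Space N)) (hK : IsClosed (K : Set (L2Space N)))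
    {D : Set (EuclideanSpace ℝ (Fin N))} (hD : MeasurableSet D)
    (h f : L2Space N) : L2Space N :=
  projOf K hK (f + chiMul hD (h - f))

/-- Two functions `f, h ∈ B_S` (`S` compact) that agree a.e. on a measurable
set `D` with nonempty interior agree a.e. on all of `ℝᴺ`, i.e. `f = h` in `L²(ℝᴺ)`. -/
theorem bandlimited_eq_of_eqOn_set (N : ℕ) (hN : 1 ≤ N)
    (S : Set (EuclideanSpace ℝ (Fin N))) (hS : IsCompact S)
    (f h : L2Space N) (hf : IsBandlimited S f) (hh : IsBandlimited S h)
    (D : Set (EuclideanSpace ℝ (Fin N))) (hD : MeasurableSet D)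
    (hDint : (interior D).Nonempty)
    (heq : (f : EuclideanSpace ℝ (Fin N) → ℂ) =ᵐ[volume.restrict D]
      (h : EuclideanSpace ℝ (Fin N) → ℂ)) :
    f = h := by
  obtain ⟨F, hFint, hFsupp, hfF⟩ := hf
  obtain ⟨G, hGint, hGsupp, hhG⟩ := hh
  set u : EuclideanSpace ℝ (Fin N) → ℂ := fun k => F k - G k with hudef
  have hu : Integrable u := hFint.sub hGint
  obtain ⟨M, hM⟩ := isBounded_iff_forall_norm_le.1 hS.isBounded
  have hM' : ∀ k, u k ≠ 0 → ‖k‖ ≤ M := by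
    intro k hk
    by_cases hkS : k ∈ S
    · exact hM k hkS
    · exact absurd (by simp [hudef, hFsupp k hkS, hGsupp k hkS]) hk
  -- integrability of the Fourier kernels
  have hker : ∀ (W : EuclideanSpace ℝ (Fin N) → ℂ), Integrable W →
      ∀ y : EuclideanSpace ℝ (Fin N),
        Integrable (fun v => 𝐞 (inner ℝ v y : ℝ) • W v) := by
    intro W hW y
    have c : Continuous fun v : EuclideanSpace ℝ (Fin N) => 𝐞 (inner ℝ v y : ℝ) :=
      Real.continuous_fourierChar.comp (continuous_id.inner continuous_const)
    refine (integrable_norm_iff (c.aestronglyMeasurable.smul hW.1)).1 ?_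
    simpa [Circle.norm_smul] using hW.norm
  have hsub : ∀ y, 𝓕⁻ u y = 𝓕⁻ F y - 𝓕⁻ G y := by
    intro y
    rw [Real.fourierInv_eq, Real.fourierInv_eq, Real.fourierInv_eq,
      ← integral_sub (hker F hFint y) (hker G hGint y)]
    exact integral_congr_ae (Filter.Eventually.of_forall fun v => by
      simp [hudef, smul_sub])
  -- continuity of 𝓕⁻ u
  have hcont : Continuous (𝓕⁻ u) := by
    refine VectorFourier.fourierIntegral_continuous Real.continuous_fourierChar ?_ hu
    exact (continuous_fst.inner continuous_snd).neg
  -- 𝓕⁻ u vanishes a.e. on D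
  have hae : (fun y => 𝓕⁻ u y) =ᵐ[volume.restrict D] (fun _ => (0 : ℂ)) := by
    have h1 : (f : EuclideanSpace ℝ (Fin N) → ℂ) =ᵐ[volume.restrict D] 𝓕⁻ F :=
      ae_restrict_of_ae hfF
    have h2 : (h : EuclideanSpace ℝ (Fin N) → ℂ) =ᵐ[volume.restrict D] 𝓕⁻ G :=
      ae_restrict_of_ae hhG
    filter_upwards [h1, h2, heq] with y hy1 hy2 hy3
    simp [hsub y, ← hy1, ← hy2, hy3]
  -- hence it vanishes on the interior of D
  obtain ⟨x₀, hx₀⟩ := hDint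
  obtain ⟨ε, hε, hball⟩ := Metric.isOpen_iff.1 isOpen_interior x₀ hx₀
  have hEqOn : Set.EqOn (fun y => 𝓕⁻ u y) (fun _ => (0:ℂ)) (interior D) := by
    refine Measure.eqOn_open_of_ae_eq (μ := (volume : Measure (EuclideanSpace ℝ (Fin N)))) ?_ isOpen_interior hcont.continuousOn continuousOn_const
    exact ae_restrict_of_ae_restrict_of_subset interior_subset hae
  have h0 : ∀ y ∈ Metric.ball x₀ ε, 𝓕⁻ u y = 0 := fun y hy => hEqOn (hball hy)
  -- analytic continuation: it vanishes everywhere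
  have hzero : ∀ x, 𝓕⁻ u x = 0 := inv_fourier_zero_everywhere hu hM' hε h0
  -- conclude
  have hFG : ∀ x, 𝓕⁻ F x = 𝓕⁻ G x := by
    intro x
    have := hzero x
    rw [hsub x, sub_eq_zero] at this
    exact this
  refine Lp.ext ?_
  calc (f : EuclideanSpace ℝ (Fin N) → ℂ) =ᵐ[volume] 𝓕⁻ F := hfF
  _ =ᵐ[volume] 𝓕⁻ G := Filter.Eventually.of_forall hFG
  _ =ᵐ[volume] (h : EuclideanSpace ℝ (Fin N) → ℂ) := hhG.symm
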